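/- Let μ⁰ = Σ_{k=1}^{N₀} p⁰ₖ δ_{x⁰ₖ}, μ¹ = Σ_{k=1}^{N₀} p⁰ₖ δ_{x¹ₖ}, μ² = Σ_{k=1}^{N₀} p⁰ₖ δ_{x²ₖ} be discrete probability measures on ℝ^d sharing the same weights p⁰. Suppose that the diagonal coupling diag(p⁰₁,…,p⁰_{N₀}) is optimal both for OT(μ⁰,μ¹) (i.e. the map x⁰ₖ ↦ x¹ₖ is an optimal transport map) and for OT(μ⁰,μ²) (i.e. x⁰ₖ ↦ x²ₖ is optimal). For t ∈ [0,1] define μ_t = Σ_{k=1}^{N₀} p⁰ₖ δ_{(1−t)x¹ₖ + t x²ₖ}. Then the diagonal coupling diag(p⁰₁,…,p⁰_{N₀}) is optimal for OT(μ⁰,μ_t); that is, the map x⁰ₖ ↦ (1−t)x¹ₖ + t x²ₖ solves OT(μ⁰,μ_t). -/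

import Mathlib

open scoped BigOperators

/-- Let `μ⁰, μ¹, μ²` be discrete probability measures on `ℝ^d`
sharing the same weights `p⁰`, with support points `x⁰, x¹, x²`. If the diagonal
coupling `diag(p⁰)` is optimal both for `OT(μ⁰,μ¹)` and for `OT(μ⁰,μ²)`, then for
every `t ∈ [0,1]` the diagonal coupling is optimal for `OT(μ⁰, μ_t)`, where
`μ_t = ∑ₖ p⁰ₖ δ_{(1−t)x¹ₖ + t x²ₖ}`. -/
theorem diag_optimal_for_interpolated_targets
    {d N0 : ℕ}
    (p0 : Fin N0 → ℝ)
    (x0 x1 x2 : Fin N0 → EuclideanSpace ℝ (Fin d))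
    (hp0 : ∀ k, 0 < p0 k) (hp0sum : ∑ k, p0 k = 1)
    (hopt1 : ∀ γ : Matrix (Fin N0) (Fin N0) ℝ,
      (∀ n k, 0 ≤ γ n k) → (∀ n, ∑ k, γ n k = p0 n) → (∀ k, ∑ n, γ n k = p0 k) →
      ∑ k, p0 k * ‖x0 k - x1 k‖ ^ 2 ≤ ∑ n, ∑ k, ‖x0 n - x1 k‖ ^ 2 * γ n k)
    (hopt2 : ∀ γ : Matrix (Fin N0) (Fin N0) ℝ,
      (∀ n k, 0 ≤ γ n k) → (∀ n, ∑ k, γ n k = p0 n) → (∀ k, ∑ n, γ n k = p0 k) →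
      ∑ k, p0 k * ‖x0 k - x2 k‖ ^ 2 ≤ ∑ n, ∑ k, ‖x0 n - x2 k‖ ^ 2 * γ n k) :
    ∀ t : ℝ, 0 ≤ t → t ≤ 1 →
      ∀ γ : Matrix (Fin N0) (Fin N0) ℝ,
        (∀ n k, 0 ≤ γ n k) → (∀ n, ∑ k, γ n k = p0 n) → (∀ k, ∑ n, γ n k = p0 k) →
        ∑ k, p0 k * ‖x0 k - ((1 - t) • x1 k + t • x2 k)‖ ^ 2 ≤
          ∑ n, ∑ k, ‖x0 n - ((1 - t) • x1 k + t • x2 k)‖ ^ 2 * γ n k := by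
  intro t ht0 ht1 γ hpos hrow hcol
  have ht0' : (0:ℝ) ≤ 1 - t := by linarith
  have hkey : ∀ (a b c : EuclideanSpace ℝ (Fin d)),
      ‖a - ((1 - t) • b + t • c)‖ ^ 2
        = (1 - t) * ‖a - b‖ ^ 2 + t * ‖a - c‖ ^ 2 - t * (1 - t) * ‖b - c‖ ^ 2 := by
    intro a b c
    have h : ∀ x : EuclideanSpace ℝ (Fin d), ‖x‖ ^ 2 = (inner ℝ x x : ℝ) :=
      fun x => (real_inner_self_eq_norm_sq x).symm
    rw [h, h, h, h]
    simp only [inner_sub_left, inner_sub_right, inner_add_left, inner_add_right,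
      real_inner_smul_left, real_inner_smul_right]
    rw [real_inner_comm b a, real_inner_comm c a, real_inner_comm c b]
    ring
  have hC : ∑ n, ∑ k, ‖x1 k - x2 k‖ ^ 2 * γ n k = ∑ k, p0 k * ‖x1 k - x2 k‖ ^ 2 := by
    rw [Finset.sum_comm]
    refine Finset.sum_congr rfl fun k _ => ?_
    rw [← Finset.mul_sum, hcol, mul_comm]
  have h1 := hopt1 γ hpos hrow hcol
  have h2 := hopt2 γ hpos hrow hcol
  simp only [hkey]
  have EL : ∑ k, p0 k * ((1 - t) * ‖x0 k - x1 k‖ ^ 2 + t * ‖x0 k - x2 k‖ ^ 2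
        - t * (1 - t) * ‖x1 k - x2 k‖ ^ 2)
      = (1 - t) * (∑ k, p0 k * ‖x0 k - x1 k‖ ^ 2) + t * (∑ k, p0 k * ‖x0 k - x2 k‖ ^ 2)
        - t * (1 - t) * (∑ k, p0 k * ‖x1 k - x2 k‖ ^ 2) := by
    simp only [Finset.mul_sum]
    rw [← Finset.sum_add_distrib, ← Finset.sum_sub_distrib]
    exact Finset.sum_congr rfl fun k _ => by ring
  have ER : ∑ n, ∑ k, ((1 - t) * ‖x0 n - x1 k‖ ^ 2 + t * ‖x0 n - x2 k‖ ^ 2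
        - t * (1 - t) * ‖x1 k - x2 k‖ ^ 2) * γ n k
      = (1 - t) * (∑ n, ∑ k, ‖x0 n - x1 k‖ ^ 2 * γ n k)
        + t * (∑ n, ∑ k, ‖x0 n - x2 k‖ ^ 2 * γ n k)
        - t * (1 - t) * (∑ k, p0 k * ‖x1 k - x2 k‖ ^ 2) := by
    rw [← hC]
    simp only [Finset.mul_sum]
    rw [← Finset.sum_add_distrib, ← Finset.sum_sub_distrib]
    refine Finset.sum_congr rfl fun n _ => ?_
    rw [← Finset.sum_add_distrib, ← Finset.sum_sub_distrib]
    exact Finset.sum_congr rfl fun k _ => by ring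
  rw [EL, ER]
  have g1 := mul_le_mul_of_nonneg_left h1 ht0'
  have g2 := mul_le_mul_of_nonneg_left h2 ht0
  linarith
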